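/- There is at most one prime p ≤ k such that v_p(k+1) ≥ ⌊log_p k⌋, for any integer k ≥ 2; i.e., if p and q are primes with p, q ≤ k, v_p(k+1) ≥ ⌊log_p k⌋ and v_q(k+1) ≥ ⌊log_q k⌋, then p = q. -/

import Mathlib

lemma aux17 (k : ℕ) (p q : ℕ) (hp : p.Prime) (hq : q.Prime)
    (hqk : q ≤ k)
    (h1 : Nat.log p k ≤ padicValNat p (k + 1))
    (h2 : Nat.log q k ≤ padicValNat q (k + 1)) (hne : p ≠ q) : q ≤ p := by
  have hk1 : 0 < k + 1 := Nat.succ_pos k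
  have hdp : p ^ Nat.log p k ∣ k + 1 :=
    dvd_trans (pow_dvd_pow p h1) (pow_padicValNat_dvd)
  have hdq : q ^ Nat.log q k ∣ k + 1 :=
    dvd_trans (pow_dvd_pow q h2) (pow_padicValNat_dvd)
  have hcop : Nat.Coprime (p ^ Nat.log p k) (q ^ Nat.log q k) :=
    (((Nat.coprime_primes hp hq).mpr hne)).pow _ _
  have hdvd : p ^ Nat.log p k * q ^ Nat.log q k ∣ k + 1 :=
    hcop.mul_dvd_of_dvd_of_dvd hdp hdq
  have hle : p ^ Nat.log p k * q ^ Nat.log q k ≤ k + 1 := Nat.le_of_dvd hk1 hdvd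
  have hlt : k < p ^ (Nat.log p k + 1) := Nat.lt_pow_succ_log_self hp.one_lt k
  have hle2 : p ^ Nat.log p k * q ^ Nat.log q k ≤ p ^ Nat.log p k * p := by
    calc p ^ Nat.log p k * q ^ Nat.log q k ≤ k + 1 := hle
    _ ≤ p ^ (Nat.log p k + 1) := hlt
    _ = p ^ Nat.log p k * p := pow_succ p _
  have hqb : q ^ Nat.log q k ≤ p :=
    Nat.le_of_mul_le_mul_left hle2 (Nat.pow_pos hp.pos)
  have hb : 0 < Nat.log q k := Nat.log_pos hq.one_lt hqk
  calc q = q ^ 1 := (pow_one q).symm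
  _ ≤ q ^ Nat.log q k := Nat.pow_le_pow_right hq.pos hb
  _ ≤ p := hqb

theorem stmt17 (k : ℕ) (hk : 2 ≤ k) (p q : ℕ) (hp : p.Prime) (hq : q.Prime)
    (hpk : p ≤ k) (hqk : q ≤ k)
    (h1 : Nat.log p k ≤ padicValNat p (k + 1))
    (h2 : Nat.log q k ≤ padicValNat q (k + 1)) : p = q := by
  by_contra hne
  exact hne (le_antisymm (aux17 k q p hq hp hpk h2 h1 (Ne.symm hne))
    (aux17 k p q hp hq hqk h1 h2 hne))
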